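/- Let p > 2 be a prime and let f be the unique polynomial over F_p of degree at most p−1 with f(0) = 0 and f(ξ^i) = i+1 for i = 0, 1, …, p−2, where ξ is a primitive element of F_p. Then the invertibility satisfies I(f) < 2(p−2)^{1/2} + 1. -/

import Mathlib

open Polynomial Finset

/-- The Carlitz composition `P_n` over a field with `q` elements, built from
the constants `c 0, c 1, …, c (n+1)`:
`P_n(x) = (⋯((c_0 x + c_1)^{q-2} + c_2)^{q-2} ⋯ + c_n)^{q-2} + c_{n+1}`. -/
def carlitzAux {F : Type*} [Field F] (q : ℕ) (c : ℕ → F) : ℕ → F → F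
  | 0 => fun x => c 0 * x + c 1
  | n + 1 => fun x => (carlitzAux q c n x) ^ (q - 2) + c (n + 2)

/-- `f` agrees (as a map) with a Carlitz composition `P_n` with `n` inversions,
where `c 0 ≠ 0` and `c i ≠ 0` for `2 ≤ i ≤ n`. -/
def IsCarlitzForm {F : Type*} [Field F] [Fintype F] (f : F → F) (n : ℕ) : Prop :=
  ∃ c : ℕ → F, c 0 ≠ 0 ∧ (∀ i, 2 ≤ i → i ≤ n → c i ≠ 0) ∧
    ∀ x, f x = carlitzAux (Fintype.card F) c n x

/-- The Carlitz rank of a map `f`: the smallest `n` such that `f` agrees with a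
Carlitz composition `P_n`. -/
noncomputable def carlitzRank {F : Type*} [Field F] [Fintype F] (f : F → F) : ℕ :=
  sInf {n | IsCarlitzForm f n}

/-- `f` is the `r`-th order cyclotomic mapping of index `ℓ` with respect to the
primitive element `ξ` and coefficients `a 0, …, a (ℓ-1)`: it maps `0` to `0` and
`x` to `a i * x ^ r` for `x` in the cyclotomic coset `C_i = ξ^i C_0`, where
`C_0` is the set of nonzero `ℓ`-th powers. -/
def IsCycMap {F : Type*} [Field F] (ℓ r : ℕ) (ξ : F) (a : ℕ → F) (f : F → F) : Prop :=
  f 0 = 0 ∧ (∀ i < ℓ, a i ≠ 0) ∧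
    ∀ i < ℓ, ∀ y : F, y ≠ 0 → f (ξ ^ i * y ^ ℓ) = a i * (ξ ^ i * y ^ ℓ) ^ r

/-- The index `Ind(f)` of a map `f` with `f 0 = 0`: the smallest divisor `ℓ` of
`q - 1` such that `f` is an `r`-th order cyclotomic mapping of index `ℓ` for some
positive `r`, some primitive element `ξ` and some nonzero coefficients. -/
noncomputable def cycIndex {F : Type*} [Field F] [Fintype F] (f : F → F) : ℕ :=
  sInf {ℓ | ℓ ∣ Fintype.card F - 1 ∧ ∃ r, 1 ≤ r ∧ ∃ ξ : F,
    orderOf ξ = Fintype.card F - 1 ∧ ∃ a : ℕ → F, IsCycMap ℓ r ξ a f}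

/-- The linearity `L(f) = max_{a ≠ 0} |{c : f c = a c}|`. -/
def linearity {F : Type*} [Field F] [Fintype F] [DecidableEq F] (f : F → F) : ℕ :=
  (Finset.univ.erase (0 : F)).sup
    (fun a => (Finset.univ.filter (fun c => f c = a * c)).card)

/-- The invertibility `I(f) = max_{c ≠ 0} |{x ≠ 0 : f x = c / x}|`. -/
def invertibility {F : Type*} [Field F] [Fintype F] [DecidableEq F] (f : F → F) : ℕ :=
  (Finset.univ.erase (0 : F)).sup
    (fun c => ((Finset.univ.erase (0 : F)).filter (fun x => f x = c / x)).card)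


private lemma stmt14_key {p : ℕ} [Fact p.Prime] (hp : 2 < p) (ξ : ZMod p)
    (hξ : orderOf ξ = p - 1) (f : Polynomial (ZMod p))
    (hval : ∀ i : ℕ, i ≤ p - 2 → f.eval (ξ ^ i) = (i : ZMod p) + 1) (c : ZMod p) :
    (((Finset.univ.erase (0 : ZMod p)).filter (fun x => f.eval x = c / x)).card) *
      ((((Finset.univ.erase (0 : ZMod p)).filter (fun x => f.eval x = c / x)).card) - 1)
      ≤ 2 * (p - 2) := by
  have hord : ξ ^ (p - 1) = 1 := by rw [← hξ]; exact pow_orderOf_eq_one ξ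
  have hξ0 : ξ ≠ 0 := by
    intro h
    rw [h, zero_pow (by omega : p - 1 ≠ 0)] at hord
    exact zero_ne_one hord
  set S := (Finset.univ.erase (0 : ZMod p)).filter (fun x => f.eval x = c / x) with hS
  set T := (Finset.range (p - 1)).filter (fun i : ℕ => ((i : ZMod p) + 1) * ξ ^ i = c) with hT
  have hinj : Set.InjOn (fun i => ξ ^ i) (Set.Iio (p - 1)) := by
    rw [← hξ]; exact pow_injOn_Iio_orderOf
  -- the powers ξ^0, ..., ξ^(p-2) cover all nonzero elements
  have himg : (Finset.range (p - 1)).image (fun i => ξ ^ i) = Finset.univ.erase 0 := by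
    apply Finset.eq_of_subset_of_card_le
    · intro y hy
      obtain ⟨i, hi, rfl⟩ := Finset.mem_image.mp hy
      exact Finset.mem_erase.mpr ⟨pow_ne_zero _ hξ0, Finset.mem_univ _⟩
    · rw [Finset.card_erase_of_mem (Finset.mem_univ 0),
        Finset.card_image_of_injOn (fun a ha b hb => hinj (by simpa using ha) (by simpa using hb)),
        Finset.card_range]
      simp [ZMod.card]
  have hST : T.card = S.card := by
    apply Finset.card_bij (fun i _ => ξ ^ i)
    · intro i hi
      obtain ⟨hi1, hi2⟩ := Finset.mem_filter.mp hi
      have hilt := Finset.mem_range.mp hi1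
      refine Finset.mem_filter.mpr ⟨Finset.mem_erase.mpr ⟨pow_ne_zero _ hξ0, Finset.mem_univ _⟩, ?_⟩
      rw [hval i (by omega), eq_div_iff (pow_ne_zero _ hξ0)]
      exact hi2
    · intro i hi j hj h
      exact hinj (by simpa using Finset.mem_range.mp (Finset.mem_filter.mp hi).1)
        (by simpa using Finset.mem_range.mp (Finset.mem_filter.mp hj).1) h
    · intro x hx
      obtain ⟨hx2, hx1⟩ := Finset.mem_filter.mp hx
      obtain ⟨i, hi, rfl⟩ := Finset.mem_image.mp (himg ▸ hx2)
      have hilt := Finset.mem_range.mp hi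
      refine ⟨i, Finset.mem_filter.mpr ⟨hi, ?_⟩, rfl⟩
      rw [hval i (by omega)] at hx1
      exact (eq_div_iff (pow_ne_zero _ hξ0)).mp hx1
  -- key algebraic fact: the difference determines the solution
  have hkey : ∀ i ∈ T, ∀ j ∈ T, i ≠ j →
      ((i : ZMod p) + 1) * (1 - ξ ^ ((j : ℤ) - (i : ℤ))) =
        (((j : ℤ) - (i : ℤ) : ℤ) : ZMod p) * ξ ^ ((j : ℤ) - (i : ℤ)) := by
    intro i hi j hj hij
    obtain ⟨hi1, hi2⟩ := Finset.mem_filter.mp hi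
    obtain ⟨hj1, hj2⟩ := Finset.mem_filter.mp hj
    have e : ((i : ZMod p) + 1) * ξ ^ i = ((j : ZMod p) + 1) * ξ ^ j := by rw [hi2, hj2]
    have e2 : ((i : ZMod p) + 1) = ((j : ZMod p) + 1) * ξ ^ ((j : ℤ) - (i : ℤ)) := by
      rw [zpow_sub₀ hξ0, zpow_natCast, zpow_natCast]
      field_simp
      linear_combination e
    have e3 : ((j : ZMod p) : ZMod p) = (i : ZMod p) + (((j : ℤ) - (i : ℤ) : ℤ) : ZMod p) := by
      push_cast; ring
    linear_combination e2 + ξ ^ ((j : ℤ) - (i : ℤ)) * e3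
  have hw1 : ∀ i j : ℕ, i < p - 1 → j < p - 1 → i ≠ j → ξ ^ ((j : ℤ) - (i : ℤ)) ≠ 1 := by
    intro i j hi hj hij h1
    set u : (ZMod p)ˣ := hξ0.isUnit.unit with hu
    have huv : (u : ZMod p) = ξ := hξ0.isUnit.unit_spec
    have huo : orderOf u = p - 1 := by rw [← orderOf_units, huv, hξ]
    have : (u : (ZMod p)ˣ) ^ ((j : ℤ) - (i : ℤ)) = 1 := by
      apply Units.ext
      rw [Units.val_zpow_eq_zpow_val, huv, h1, Units.val_one]
    have hdvd : ((p - 1 : ℕ) : ℤ) ∣ ((j : ℤ) - (i : ℤ)) := by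
      rw [← huo]; exact orderOf_dvd_iff_zpow_eq_one.mpr this
    have hne : ((j : ℤ) - (i : ℤ)) ≠ 0 := by
      intro h; apply hij; omega
    have habs : |(j : ℤ) - (i : ℤ)| < ((p - 1 : ℕ) : ℤ) := by
      rw [abs_lt]; constructor <;> omega
    have hpos : (0:ℤ) < |(j : ℤ) - (i : ℤ)| := by rw [abs_pos]; exact hne
    have hle := Int.le_of_dvd hpos ((dvd_abs _ _).mpr hdvd)
    exact absurd habs (not_lt.mpr hle)
  -- inject ordered pairs of distinct solutions into nonzero differences
  have hcard : T.offDiag.card ≤ ((Finset.Icc (-((p:ℤ)-2)) ((p:ℤ)-2)).erase 0).card := by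
    apply Finset.card_le_card_of_injOn (fun q => (q.2 : ℤ) - (q.1 : ℤ))
    · rintro ⟨i, j⟩ hq
      obtain ⟨hiT, hjT, hij⟩ := Finset.mem_offDiag.mp hq
      have hi1 := Finset.mem_range.mp (Finset.mem_filter.mp hiT).1
      have hj1 := Finset.mem_range.mp (Finset.mem_filter.mp hjT).1
      dsimp only
      refine Finset.mem_erase.mpr ⟨fun h => hij (by omega), ?_⟩
      refine Finset.mem_Icc.mpr ⟨by omega, by omega⟩
    · rintro ⟨i, j⟩ hq ⟨i', j'⟩ hq' hd
      simp only [Finset.coe_offDiag, Set.mem_offDiag] at hq hq'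
      obtain ⟨hiT, hjT, hij⟩ := hq
      obtain ⟨hiT', hjT', hij'⟩ := hq'
      simp only at hd
      have hi1 := Finset.mem_range.mp (Finset.mem_filter.mp hiT).1
      have hj1 := Finset.mem_range.mp (Finset.mem_filter.mp hjT).1
      have hi1' := Finset.mem_range.mp (Finset.mem_filter.mp hiT').1
      have hj1' := Finset.mem_range.mp (Finset.mem_filter.mp hjT').1
      have e1 := hkey i hiT j hjT hij
      have e2 := hkey i' hiT' j' hjT' hij'
      rw [hd] at e1
      have hwne : (1 : ZMod p) - ξ ^ ((j' : ℤ) - (i' : ℤ)) ≠ 0 :=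
        sub_ne_zero.mpr fun h => hw1 i' j' hi1' hj1' hij' h.symm
      have : ((i : ZMod p) + 1) = ((i' : ZMod p) + 1) :=
        mul_right_cancel₀ hwne (e1.trans e2.symm)
      have hii : (i : ZMod p) = (i' : ZMod p) := by linear_combination this
      have hii' : i = i' := by
        have := congrArg ZMod.val hii
        rwa [ZMod.val_cast_of_lt (by omega), ZMod.val_cast_of_lt (by omega)] at this
      subst hii'
      have : j = j' := by omega
      subst this
      rfl
  have hDcard : ((Finset.Icc (-((p:ℤ)-2)) ((p:ℤ)-2)).erase 0).card = 2 * (p - 2) := by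
    rw [Finset.card_erase_of_mem (Finset.mem_Icc.mpr ⟨by omega, by omega⟩), Int.card_Icc]
    omega
  have hoff := Finset.offDiag_card T
  have hmul : T.card * (T.card - 1) = T.card * T.card - T.card := by
    rcases Nat.eq_zero_or_pos T.card with h | h
    · simp [h]
    · have h2 : T.card - 1 + 1 = T.card := by omega
      calc T.card * (T.card - 1) = T.card * (T.card - 1 + 1) - T.card := by ring_nf; omega
        _ = T.card * T.card - T.card := by rw [h2]
  calc S.card * (S.card - 1) = T.card * (T.card - 1) := by rw [hST]
    _ = T.offDiag.card := by rw [hmul, hoff]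
    _ ≤ _ := hcard.trans_eq hDcard

/-- The discrete logarithm polynomial `f` over `F_p` (`p > 2` prime)
satisfies `I(f) < 2(p−2)^{1/2} + 1`. -/
theorem stmt14 {p : ℕ} [Fact p.Prime] (hp : 2 < p) (ξ : ZMod p)
    (hξ : orderOf ξ = p - 1) (f : Polynomial (ZMod p))
    (hdeg : f.degree ≤ ((p - 1 : ℕ) : WithBot ℕ)) (h0 : f.eval 0 = 0)
    (hval : ∀ i : ℕ, i ≤ p - 2 → f.eval (ξ ^ i) = (i : ZMod p) + 1) :
    (invertibility (fun x => f.eval x) : ℝ) < 2 * Real.sqrt ((p : ℝ) - 2) + 1 := by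
  have hpe : ((Finset.univ.erase (0 : ZMod p))).Nonempty :=
    ⟨1, Finset.mem_erase.mpr ⟨one_ne_zero, Finset.mem_univ _⟩⟩
  obtain ⟨c, hc, hsup⟩ := Finset.exists_mem_eq_sup _ hpe
    (fun c => ((Finset.univ.erase (0 : ZMod p)).filter (fun x => f.eval x = c / x)).card)
  have hIe : invertibility (fun x => f.eval x) =
      ((Finset.univ.erase (0 : ZMod p)).filter (fun x => f.eval x = c / x)).card := by
    rw [invertibility]; exact hsup
  have hkey : invertibility (fun x => f.eval x) * (invertibility (fun x => f.eval x) - 1)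
      ≤ 2 * (p - 2) := by rw [hIe]; exact stmt14_key hp ξ hξ f hval c
  set N := invertibility (fun x => f.eval x) with hN
  have hps : (1:ℝ) ≤ (p:ℝ) - 2 := by
    have : (3:ℕ) ≤ p := hp
    have := (Nat.cast_le (α := ℝ)).mpr this
    push_cast at this ⊢; linarith
  rcases Nat.eq_zero_or_pos N with h0' | hpos
  · rw [h0']
    have := Real.sqrt_nonneg ((p:ℝ) - 2)
    push_cast; linarith
  · have h1 : ((N:ℝ) - 1)^2 ≤ 2 * ((p:ℝ) - 2) := by
      have hcast : ((N * (N-1) : ℕ) : ℝ) ≤ ((2*(p-2) : ℕ) : ℝ) := Nat.cast_le.mpr hkey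
      push_cast [Nat.cast_sub hpos, Nat.cast_sub (show 2 ≤ p by omega)] at hcast
      have hNr : (1:ℝ) ≤ (N:ℝ) := by exact_mod_cast hpos
      nlinarith
    have hN1 : (0:ℝ) ≤ (N:ℝ) - 1 := by
      have : (1:ℝ) ≤ (N:ℝ) := by exact_mod_cast hpos
      linarith
    have h2 : (N:ℝ) - 1 ≤ Real.sqrt (2 * ((p:ℝ)-2)) := by
      rw [← Real.sqrt_sq hN1]; exact Real.sqrt_le_sqrt h1
    have h3 : Real.sqrt (2*((p:ℝ)-2)) < Real.sqrt (4*((p:ℝ)-2)) :=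
      Real.sqrt_lt_sqrt (by linarith) (by linarith)
    have h4 : Real.sqrt (4*((p:ℝ)-2)) = 2 * Real.sqrt ((p:ℝ)-2) := by
      rw [show (4:ℝ)*((p:ℝ)-2) = (2*Real.sqrt ((p:ℝ)-2))^2 by
        rw [mul_pow, Real.sq_sqrt (by linarith)]; ring]
      exact Real.sqrt_sq (by positivity)
    linarith
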